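/- (Validity of SOC-RLT constraints.) Let C ⊆ ℝ × ℝ^n be a set of vectors w = (t, x) each satisfying the linear inequality a₁^T x ≤ b₁ t and the second-order-cone inequality ‖d₂ t − C₂^T x‖ ≤ b₂ t − a₂^T x, where a₁, a₂ ∈ ℝ^n, b₁, b₂ ∈ ℝ, d₂ ∈ ℝ^p, and C₂ ∈ ℝ^{n×p}. Then every M ∈ CP(C) with block form M = [[τ, z^T],[z, Z]] (τ ∈ ℝ, z ∈ ℝ^n, Z ∈ S^n) satisfies the linearized SOC-RLT inequality ‖b₁ d₂ τ − d₂ a₁^T z − b₁ C₂^T z + C₂^T Z a₁‖ ≤ b₁b₂ τ − b₁ a₂^T z − b₂ a₁^T z + a₁^T Z a₂. -/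

import Mathlib

open Matrix

/-- The Euclidean norm of a vector in `ℝ^p`. -/
noncomputable def euclNorm {p : ℕ} (x : Fin p → ℝ) : ℝ :=
  Real.sqrt (∑ i, x i ^ 2)

/-- The completely positive cone over a set `C` of vectors: all finite sums
`∑ₖ xᵏ(xᵏ)ᵀ` with each `xᵏ ∈ C`. -/
def CPcone {ι : Type*} [Fintype ι] (C : Set (ι → ℝ)) : Set (Matrix ι ι ℝ) :=
  {X | ∃ (k : ℕ) (v : Fin k → ι → ℝ), (∀ j, v j ∈ C) ∧
    X = ∑ j, Matrix.vecMulVec (v j) (v j)}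

/-- The bordered matrix `[[τ, zᵀ], [z, Z]]`. -/
def borderedMatrix {n : ℕ} (τ : ℝ) (z : Fin n → ℝ) (Z : Matrix (Fin n) (Fin n) ℝ) :
    Matrix (Unit ⊕ Fin n) (Unit ⊕ Fin n) ℝ :=
  Matrix.fromBlocks (Matrix.of fun _ _ => τ) (Matrix.of fun _ j => z j)
    (Matrix.of fun i _ => z i) Z

lemma euclNorm_eq_norm {p : ℕ} (x : EuclideanSpace ℝ (Fin p)) :
    euclNorm x = ‖x‖ := by
  rw [EuclideanSpace.norm_eq]
  simp [euclNorm, sq_abs]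

/-- **validity of SOC-RLT constraints.** Suppose every
`w = (t,x) ∈ C ⊆ ℝ × ℝ^n` satisfies the linear inequality `a₁ᵀx ≤ b₁t` and the
second-order-cone inequality `‖d₂t − C₂ᵀx‖ ≤ b₂t − a₂ᵀx`.  Then every
`M = [[τ, zᵀ],[z, Z]] ∈ CP(C)` satisfies the linearized SOC-RLT inequality
`‖b₁d₂τ − d₂a₁ᵀz − b₁C₂ᵀz + C₂ᵀZa₁‖ ≤ b₁b₂τ − b₁a₂ᵀz − b₂a₁ᵀz + a₁ᵀZa₂`. -/
theorem soc_rlt_constraints_valid (n p : ℕ) (C : Set (Unit ⊕ Fin n → ℝ))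
    (a₁ a₂ : Fin n → ℝ) (b₁ b₂ : ℝ) (d₂ : Fin p → ℝ)
    (C₂ : Matrix (Fin n) (Fin p) ℝ)
    (hlin : ∀ w ∈ C, a₁ ⬝ᵥ (fun j => w (Sum.inr j)) ≤ b₁ * w (Sum.inl ()))
    (hsoc : ∀ w ∈ C,
      euclNorm (w (Sum.inl ()) • d₂ - C₂.transpose.mulVec (fun j => w (Sum.inr j))) ≤
        b₂ * w (Sum.inl ()) - a₂ ⬝ᵥ (fun j => w (Sum.inr j)))
    (τ : ℝ) (z : Fin n → ℝ) (Z : Matrix (Fin n) (Fin n) ℝ)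
    (hM : borderedMatrix τ z Z ∈ CPcone C) :
    euclNorm ((b₁ * τ) • d₂ - (a₁ ⬝ᵥ z) • d₂ - b₁ • C₂.transpose.mulVec z +
        C₂.transpose.mulVec (Z.mulVec a₁)) ≤
      b₁ * b₂ * τ - b₁ * (a₂ ⬝ᵥ z) - b₂ * (a₁ ⬝ᵥ z) + a₁ ⬝ᵥ Z.mulVec a₂ := by
  obtain ⟨k, v, hvC, hEq⟩ := hM
  set t : Fin k → ℝ := fun j => v j (Sum.inl ()) with ht
  set x : Fin k → Fin n → ℝ := fun j i => v j (Sum.inr i) with hx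
  have hτ : τ = ∑ j, t j * t j := by
    have := congrFun (congrFun hEq (Sum.inl ())) (Sum.inl ())
    simpa [borderedMatrix, Matrix.sum_apply, Matrix.vecMulVec_apply] using this
  have hz : ∀ i, z i = ∑ j, t j * x j i := by
    intro i
    have := congrFun (congrFun hEq (Sum.inl ())) (Sum.inr i)
    simpa [borderedMatrix, Matrix.sum_apply, Matrix.vecMulVec_apply] using this
  have hZ : ∀ i i', Z i i' = ∑ j, x j i * x j i' := by
    intro i i'
    have := congrFun (congrFun hEq (Sum.inr i)) (Sum.inr i')
    simpa [borderedMatrix, Matrix.sum_apply, Matrix.vecMulVec_apply] using this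
  set c : Fin k → ℝ := fun j => b₁ * t j - a₁ ⬝ᵥ x j with hc
  have hcnn : ∀ j, 0 ≤ c j := by
    intro j
    have := hlin (v j) (hvC j)
    simp only [hc]
    linarith [this]
  set u : Fin k → EuclideanSpace ℝ (Fin p) :=
    fun j => WithLp.toLp 2 (t j • d₂ - C₂.transpose.mulVec (x j) : Fin p → ℝ) with hu
  -- dot product expansions
  have h1 : ∀ (a : Fin n → ℝ), a ⬝ᵥ z = ∑ j, t j * (a ⬝ᵥ x j) := by
    intro a
    simp only [dotProduct, hz, Finset.mul_sum, Finset.sum_mul]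
    rw [Finset.sum_comm]
    exact Finset.sum_congr rfl fun j _ => Finset.sum_congr rfl fun i _ => by ring
  have h2 : ∀ i, C₂.transpose.mulVec z i = ∑ j, t j * C₂.transpose.mulVec (x j) i := by
    intro i
    simp only [mulVec, dotProduct, hz, Finset.mul_sum]
    rw [Finset.sum_comm]
    exact Finset.sum_congr rfl fun j _ => Finset.sum_congr rfl fun l _ => by ring
  have h3 : ∀ (a : Fin n → ℝ) (l : Fin n), Z.mulVec a l = ∑ j, (a ⬝ᵥ x j) * x j l := by
    intro a l
    show ∑ m, Z l m * a m = _
    simp only [hZ, Finset.sum_mul]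
    rw [Finset.sum_comm]
    refine Finset.sum_congr rfl fun j _ => ?_
    simp only [dotProduct, Finset.sum_mul]
    exact Finset.sum_congr rfl fun m _ => by ring
  have h4 : ∀ i, C₂.transpose.mulVec (Z.mulVec a₁) i
      = ∑ j, (a₁ ⬝ᵥ x j) * C₂.transpose.mulVec (x j) i := by
    intro i
    show ∑ l, C₂.transpose i l * Z.mulVec a₁ l = _
    calc ∑ l, C₂.transpose i l * Z.mulVec a₁ l
        = ∑ l, ∑ j, C₂.transpose i l * ((a₁ ⬝ᵥ x j) * x j l) := by
          simp only [h3, Finset.mul_sum]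
      _ = ∑ j, ∑ l, C₂.transpose i l * ((a₁ ⬝ᵥ x j) * x j l) := Finset.sum_comm
      _ = _ := by
          refine Finset.sum_congr rfl fun j _ => ?_
          simp only [mulVec, dotProduct, Finset.mul_sum]
          exact Finset.sum_congr rfl fun l _ => by ring
  have h5 : a₁ ⬝ᵥ Z.mulVec a₂ = ∑ j, (a₁ ⬝ᵥ x j) * (a₂ ⬝ᵥ x j) := by
    show ∑ l, a₁ l * Z.mulVec a₂ l = _
    calc ∑ l, a₁ l * Z.mulVec a₂ l
        = ∑ l, ∑ j, a₁ l * ((a₂ ⬝ᵥ x j) * x j l) := by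
          simp only [h3, Finset.mul_sum]
      _ = ∑ j, ∑ l, a₁ l * ((a₂ ⬝ᵥ x j) * x j l) := Finset.sum_comm
      _ = _ := by
          refine Finset.sum_congr rfl fun j _ => ?_
          simp only [dotProduct, Finset.mul_sum, Finset.sum_mul]
          rw [Finset.sum_comm]
          exact Finset.sum_congr rfl fun l _ => Finset.sum_congr rfl fun m _ => by ring
  have hvec : ((b₁ * τ) • d₂ - (a₁ ⬝ᵥ z) • d₂ - b₁ • C₂.transpose.mulVec z +
      C₂.transpose.mulVec (Z.mulVec a₁)) = (∑ j, c j • u j : EuclideanSpace ℝ (Fin p)) := by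
    funext i
    have hsum : (∑ j, c j • u j : EuclideanSpace ℝ (Fin p)) i
        = ∑ j, c j * (t j * d₂ i - C₂.transpose.mulVec (x j) i) := by
      rw [WithLp.ofLp_sum, Finset.sum_apply]
      exact Finset.sum_congr rfl fun j _ => by
        simp [hu, Pi.smul_apply, Pi.sub_apply, smul_eq_mul]
    rw [hsum]
    simp only [Pi.add_apply, Pi.sub_apply, Pi.smul_apply, smul_eq_mul,
      hτ, h1 a₁, h2, h4, Finset.mul_sum, Finset.sum_mul,
      ← Finset.sum_sub_distrib, ← Finset.sum_add_distrib]
    exact Finset.sum_congr rfl fun j _ => by simp only [hc]; ring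
  have hrhs : b₁ * b₂ * τ - b₁ * (a₂ ⬝ᵥ z) - b₂ * (a₁ ⬝ᵥ z) + a₁ ⬝ᵥ Z.mulVec a₂
      = ∑ j, c j * (b₂ * t j - a₂ ⬝ᵥ x j) := by
    simp only [hτ, h1 a₁, h1 a₂, h5, Finset.mul_sum,
      ← Finset.sum_sub_distrib, ← Finset.sum_add_distrib]
    exact Finset.sum_congr rfl fun j _ => by simp only [hc]; ring
  rw [hvec, hrhs, euclNorm_eq_norm]
  calc ‖∑ j, c j • u j‖ ≤ ∑ j, ‖c j • u j‖ := norm_sum_le _ _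
    _ ≤ ∑ j, c j * (b₂ * t j - a₂ ⬝ᵥ x j) := by
        refine Finset.sum_le_sum fun j _ => ?_
        rw [norm_smul, Real.norm_eq_abs, abs_of_nonneg (hcnn j)]
        refine mul_le_mul_of_nonneg_left ?_ (hcnn j)
        have := hsoc (v j) (hvC j)
        rw [← euclNorm_eq_norm]
        exact this
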